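/- Let A be an n×n real SPSD matrix, let Q ∈ ℝ^{n×ℓ}, and let 1 ≤ k < n. Then the minimum of ‖A − AQCQᵀA‖_F over all matrices C ∈ ℝ^{ℓ×ℓ} with rank(C) ≤ k is at most the minimum of ‖A − QC‖_F over all matrices C ∈ ℝ^{ℓ×n} with rank(C) ≤ k. In other words, a relative-error Frobenius-norm guarantee for the best one-sided rank-k projection onto the column space of Q implies the same guarantee for the best two-sided rank-k approximation with range and co-range in the column space of AQ. -/

import Mathlib

open Matrix BigOperators

/-- `M = U * diagonal μ * Uᵀ` is a spectral (eigen)decomposition of the symmetric matrix `M`,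
with orthogonal `U` and eigenvalues `μ` listed in nonincreasing order. -/
def IsSpectralDecomp {n : ℕ} (M U : Matrix (Fin n) (Fin n) ℝ) (μ : Fin n → ℝ) : Prop :=
  Uᵀ * U = 1 ∧ Antitone μ ∧ M = U * Matrix.diagonal μ * Uᵀ

/-- Truncation of a spectral decomposition to its `k` largest (first `k`) eigenvalues:
the best rank-`k` approximation `M_(k)` associated with the decomposition `(U, μ)`. -/
noncomputable def trunc {n : ℕ} (k : ℕ) (U : Matrix (Fin n) (Fin n) ℝ) (μ : Fin n → ℝ) :
    Matrix (Fin n) (Fin n) ℝ :=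
  U * Matrix.diagonal (fun i : Fin n => if (i : ℕ) < k then μ i else 0) * Uᵀ

/-- `f` is operator monotone on SPSD matrices: for all `m` and all `m × m` SPSD matrices
`B ⪰ C ⪰ 0`, one has `f(B) ⪰ f(C)`, where matrix functions are computed through (any)
spectral decomposition. -/
def OperatorMonotone (f : ℝ → ℝ) : Prop :=
  ∀ (m : ℕ) (B C U V : Matrix (Fin m) (Fin m) ℝ) (β γ : Fin m → ℝ),
    IsSpectralDecomp B U β → IsSpectralDecomp C V γ →
    B.PosSemidef → C.PosSemidef → (B - C).PosSemidef →
    (U * Matrix.diagonal (f ∘ β) * Uᵀ - V * Matrix.diagonal (f ∘ γ) * Vᵀ).PosSemidef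

/-- Squared Frobenius norm `‖M‖_F² = Σ_{i,j} M_{ij}²`. -/
noncomputable def frobSq {m l : ℕ} (M : Matrix (Fin m) (Fin l) ℝ) : ℝ :=
  ∑ i, ∑ j, (M i j) ^ 2

/-- Frobenius norm. -/
noncomputable def frobNorm {m l : ℕ} (M : Matrix (Fin m) (Fin l) ℝ) : ℝ :=
  Real.sqrt (frobSq M)

/-- The eigenvalues of a Hermitian matrix listed in nonincreasing order:
`eigsDesc hM i` is the `(i+1)`-st largest eigenvalue of `M`. -/
noncomputable def eigsDesc {m : ℕ} {M : Matrix (Fin m) (Fin m) ℝ} (hM : M.IsHermitian) :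
    Fin m → ℝ :=
  fun i => (hM.eigenvalues ∘ Tuple.sort hM.eigenvalues) i.rev

/-- The singular values of `M` in nonincreasing order: `svDesc M i` is the `(i+1)`-st largest
singular value of `M`, i.e. the square root of the `(i+1)`-st largest eigenvalue of `MᴴM`. -/
noncomputable def svDesc {m l : ℕ} (M : Matrix (Fin m) (Fin l) ℝ) : Fin l → ℝ :=
  fun i => Real.sqrt (eigsDesc (Matrix.isHermitian_conjTranspose_mul_self M) i)

/-- Nuclear norm: the sum of the singular values. -/
noncomputable def nuclearNorm {m l : ℕ} (M : Matrix (Fin m) (Fin l) ℝ) : ℝ :=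
  ∑ i, svDesc M i

/-- Operator (spectral) norm: the largest singular value. -/
noncomputable def opNorm {m l : ℕ} (M : Matrix (Fin m) (Fin l) ℝ) : ℝ :=
  ⨆ i, svDesc M i

/-- `p`-th power of the Schatten `p`-norm: `‖M‖_(p)^p = Σᵢ σᵢ(M)^p`. -/
noncomputable def schattenPow {m l : ℕ} (p : ℝ) (M : Matrix (Fin m) (Fin l) ℝ) : ℝ :=
  ∑ i, svDesc M i ^ p

/-- Schatten `p`-norm: `‖M‖_(p) = (Σᵢ σᵢ(M)^p)^(1/p)`. -/
noncomputable def schattenNorm {m l : ℕ} (p : ℝ) (M : Matrix (Fin m) (Fin l) ℝ) : ℝ :=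
  (schattenPow p M) ^ (1 / p)

/-- `P` is the orthogonal projection onto the column space of `M`. -/
def IsOrthProjOnto {m l : ℕ} (P : Matrix (Fin m) (Fin m) ℝ) (M : Matrix (Fin m) (Fin l) ℝ) :
    Prop :=
  Pᵀ = P ∧ P * P = P ∧ P * M = M ∧ ∃ Y : Matrix (Fin l) (Fin m) ℝ, P = M * Y


/-! ### Auxiliary machinery -/

section Aux
open Matrix

lemma conjT {a b : ℕ} (X : Matrix (Fin a) (Fin b) ℝ) : Xᴴ = Xᵀ :=
  Matrix.conjTranspose_eq_transpose_of_trivial X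

/-- Pseudoinverse of a (hermitian) real matrix, defined through the spectral theorem. -/
noncomputable def rpinv {m : ℕ} (N : Matrix (Fin m) (Fin m) ℝ) : Matrix (Fin m) (Fin m) ℝ :=
  if hN : N.IsHermitian then
    (hN.eigenvectorUnitary : Matrix (Fin m) (Fin m) ℝ) *
      Matrix.diagonal (fun i => if hN.eigenvalues i = 0 then 0 else (hN.eigenvalues i)⁻¹) *
      (hN.eigenvectorUnitary : Matrix (Fin m) (Fin m) ℝ)ᵀ
  else 0

lemma rpinv_spec {m : ℕ} (N : Matrix (Fin m) (Fin m) ℝ) (hN : N.IsHermitian) :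
    (rpinv N)ᵀ = rpinv N ∧ N * rpinv N * N = N ∧ rpinv N * N * rpinv N = rpinv N := by
  set U : Matrix (Fin m) (Fin m) ℝ := (hN.eigenvectorUnitary : Matrix (Fin m) (Fin m) ℝ) with hU
  have hUU : Uᵀ * U = 1 := by
    have h := Matrix.mem_unitaryGroup_iff'.mp (hN.eigenvectorUnitary).2
    rwa [Matrix.star_eq_conjTranspose, conjT] at h
  set μ : Fin m → ℝ := hN.eigenvalues with hμ
  have hN' : N = U * Matrix.diagonal μ * Uᵀ := by
    have h := hN.spectral_theorem
    rwa [Unitary.conjStarAlgAut_apply, Matrix.star_eq_conjTranspose, conjT, RCLike.ofReal_real_eq_id,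
      Function.id_comp] at h
  set g : Fin m → ℝ := fun i => if μ i = 0 then 0 else (μ i)⁻¹ with hg
  have sand : ∀ d e : Fin m → ℝ, (U * Matrix.diagonal d * Uᵀ) * (U * Matrix.diagonal e * Uᵀ)
      = U * Matrix.diagonal (fun i => d i * e i) * Uᵀ := by
    intro d e
    calc (U * Matrix.diagonal d * Uᵀ) * (U * Matrix.diagonal e * Uᵀ)
        = U * Matrix.diagonal d * (Uᵀ * U) * Matrix.diagonal e * Uᵀ := by
          simp only [Matrix.mul_assoc]
      _ = U * (Matrix.diagonal d * Matrix.diagonal e) * Uᵀ := by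
          rw [hUU]; simp only [Matrix.mul_one, Matrix.mul_assoc]
      _ = U * Matrix.diagonal (fun i => d i * e i) * Uᵀ := by
          rw [Matrix.diagonal_mul_diagonal]
  have hp : rpinv N = U * Matrix.diagonal g * Uᵀ := by
    rw [rpinv, dif_pos hN]
  refine ⟨?_, ?_, ?_⟩
  · rw [hp]
    simp only [Matrix.transpose_mul, Matrix.transpose_transpose, Matrix.diagonal_transpose,
      Matrix.mul_assoc]
  · conv_lhs => rw [hp, hN']
    rw [sand, sand]
    conv_rhs => rw [hN']
    have hfg : (fun i => μ i * g i * μ i) = μ := by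
      funext i
      by_cases h : μ i = 0 <;> simp [hg, h]
    rw [hfg]
  · conv_lhs => rw [hp, hN']
    rw [sand, sand]
    conv_rhs => rw [hp]
    have hfg : (fun i => g i * μ i * g i) = g := by
      funext i
      by_cases h : μ i = 0 <;> simp [hg, h]
    rw [hfg]

section Gram
variable {a b : ℕ} (M : Matrix (Fin a) (Fin b) ℝ)

lemma gram_key : M * rpinv (Mᵀ * M) * (Mᵀ * M) = M := by
  obtain ⟨hpT, hNpN, hpNp⟩ := rpinv_spec (Mᵀ * M) (by rw [← conjT]; exact Matrix.isHermitian_conjTranspose_mul_self M)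
  set p := rpinv (Mᵀ * M) with hp
  set X := M * p * (Mᵀ * M) - M with hX
  have hMX : Mᵀ * X = 0 := by
    rw [hX, Matrix.mul_sub]
    rw [show Mᵀ * (M * p * (Mᵀ * M)) = Mᵀ * M * p * (Mᵀ * M) by
      simp only [Matrix.mul_assoc]]
    rw [hNpN, sub_self]
  have hXX : Xᴴ * X = 0 := by
    have hXT : Xᵀ = Mᵀ * M * p * Mᵀ - Mᵀ := by
      rw [hX]
      simp only [Matrix.transpose_sub, Matrix.transpose_mul, Matrix.transpose_transpose,
        hpT, Matrix.mul_assoc]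
    rw [conjT, hXT, Matrix.sub_mul]
    rw [show Mᵀ * M * p * Mᵀ * X = Mᵀ * M * p * (Mᵀ * X) by simp only [Matrix.mul_assoc],
      hMX]
    simp
  have := Matrix.conjTranspose_mul_self_eq_zero.mp hXX
  rw [hX, sub_eq_zero] at this
  exact this

lemma gram_symm : (M * rpinv (Mᵀ * M) * Mᵀ)ᵀ = M * rpinv (Mᵀ * M) * Mᵀ := by
  obtain ⟨hpT, -, -⟩ := rpinv_spec (Mᵀ * M) (by rw [← conjT]; exact Matrix.isHermitian_conjTranspose_mul_self M)
  simp only [Matrix.transpose_mul, Matrix.transpose_transpose, hpT, Matrix.mul_assoc]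

lemma gram_fix : (M * rpinv (Mᵀ * M) * Mᵀ) * M = M := by
  rw [show (M * rpinv (Mᵀ * M) * Mᵀ) * M = M * rpinv (Mᵀ * M) * (Mᵀ * M) by
    simp only [Matrix.mul_assoc]]
  exact gram_key M

lemma gram_idem : (M * rpinv (Mᵀ * M) * Mᵀ) * (M * rpinv (Mᵀ * M) * Mᵀ)
    = M * rpinv (Mᵀ * M) * Mᵀ := by
  rw [show (M * rpinv (Mᵀ * M) * Mᵀ) * (M * rpinv (Mᵀ * M) * Mᵀ)
      = ((M * rpinv (Mᵀ * M) * Mᵀ) * M) * (rpinv (Mᵀ * M) * Mᵀ) by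
    simp only [Matrix.mul_assoc]]
  rw [gram_fix M, ← Matrix.mul_assoc]
end Gram

section Frob
variable {a b : ℕ}

lemma frobSq_eq_trace (M : Matrix (Fin a) (Fin b) ℝ) : frobSq M = (Mᵀ * M).trace := by
  rw [frobSq, Matrix.trace]
  simp only [Matrix.diag_apply, Matrix.mul_apply, Matrix.transpose_apply, sq]
  exact Finset.sum_comm

lemma frobSq_nonneg (M : Matrix (Fin a) (Fin b) ℝ) : 0 ≤ frobSq M := by
  apply Finset.sum_nonneg; intro i _; apply Finset.sum_nonneg; intro j _; positivity

lemma frobSq_transpose (M : Matrix (Fin a) (Fin b) ℝ) : frobSq Mᵀ = frobSq M := by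
  rw [frobSq, frobSq]
  exact Finset.sum_comm

lemma frobNorm_le_of_frobSq_le {c d : ℕ} {M : Matrix (Fin a) (Fin b) ℝ}
    {N : Matrix (Fin c) (Fin d) ℝ} (h : frobSq M ≤ frobSq N) : frobNorm M ≤ frobNorm N :=
  Real.sqrt_le_sqrt h

lemma trace_psd_mul_nonneg {L K : Matrix (Fin a) (Fin a) ℝ} (hL : L.PosSemidef)
    (hK : K.PosSemidef) : 0 ≤ (L * K).trace := by
  obtain ⟨B, rfl⟩ : ∃ B : Matrix (Fin a) (Fin a) ℝ, L = Bᴴ * B := by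
    open scoped MatrixOrder in exact CStarAlgebra.nonneg_iff_eq_star_mul_self.mp hL.nonneg
  obtain ⟨C, rfl⟩ : ∃ C : Matrix (Fin a) (Fin a) ℝ, K = Cᴴ * C := by
    open scoped MatrixOrder in exact CStarAlgebra.nonneg_iff_eq_star_mul_self.mp hK.nonneg
  have h : (Bᴴ * B) * (Cᴴ * C) = Bᴴ * ((B * Cᴴ) * C) := by
    simp only [Matrix.mul_assoc]
  rw [h, Matrix.trace_mul_comm, Matrix.mul_assoc, Matrix.trace_mul_comm]
  have h2 : (C * Bᴴ) = (B * Cᴴ)ᴴ := by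
    rw [Matrix.conjTranspose_mul, Matrix.conjTranspose_conjTranspose]
  rw [h2, conjT, ← frobSq_eq_trace]
  exact frobSq_nonneg _

lemma frob_mono_psd {L K : Matrix (Fin a) (Fin a) ℝ} (hL : L.PosSemidef)
    (hKL : (K - L).PosSemidef) : frobNorm L ≤ frobNorm K := by
  have hK : K.PosSemidef := by
    have := hKL.add hL
    simpa using this
  have hLT : Lᵀ = L := by rw [← conjT]; exact hL.isHermitian
  have hKT : Kᵀ = K := by rw [← conjT]; exact hK.isHermitian
  apply frobNorm_le_of_frobSq_le
  rw [frobSq_eq_trace, frobSq_eq_trace, hLT, hKT]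
  have t1 : 0 ≤ ((K - L) * L).trace := trace_psd_mul_nonneg hKL hL
  have t2 : 0 ≤ ((K - L) * K).trace := trace_psd_mul_nonneg hKL hK
  rw [Matrix.sub_mul, Matrix.trace_sub, sub_nonneg] at t1 t2
  rw [Matrix.trace_mul_comm K L] at t1
  linarith

lemma frobSq_proj_left {P : Matrix (Fin a) (Fin a) ℝ} (hPT : Pᵀ = P) (hPP : P * P = P)
    (M : Matrix (Fin a) (Fin b) ℝ) : frobSq (P * M) ≤ frobSq M := by
  have hPPM : P * (P * M) = P * M := by rw [← Matrix.mul_assoc, hPP]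
  have h1 : frobSq (P * M) = (Mᵀ * (P * M)).trace := by
    rw [frobSq_eq_trace, Matrix.transpose_mul, hPT, Matrix.mul_assoc, hPPM]
  have h2 : frobSq (M - P * M) = (Mᵀ * M).trace - (Mᵀ * (P * M)).trace := by
    rw [frobSq_eq_trace, Matrix.transpose_sub, Matrix.transpose_mul, hPT,
      Matrix.sub_mul, Matrix.mul_sub, Matrix.mul_sub]
    simp only [Matrix.mul_assoc, hPPM, Matrix.trace_sub]
    ring
  have h3 := frobSq_nonneg (M - P * M)
  have h4 : frobSq M = (Mᵀ * M).trace := frobSq_eq_trace M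
  linarith

lemma frobSq_proj_right {P : Matrix (Fin b) (Fin b) ℝ} (hPT : Pᵀ = P) (hPP : P * P = P)
    (M : Matrix (Fin a) (Fin b) ℝ) : frobSq (M * P) ≤ frobSq M := by
  have h : (M * P)ᵀ = P * Mᵀ := by rw [Matrix.transpose_mul, hPT]
  calc frobSq (M * P) = frobSq (P * Mᵀ) := by rw [← h, frobSq_transpose]
    _ ≤ frobSq Mᵀ := frobSq_proj_left hPT hPP Mᵀ
    _ = frobSq M := frobSq_transpose M
end Frob

lemma rank_factor {l n k : ℕ} (C : Matrix (Fin l) (Fin n) ℝ) (h : C.rank ≤ k) :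
    ∃ (F : Matrix (Fin l) (Fin k) ℝ) (G : Matrix (Fin k) (Fin n) ℝ), C = F * G := by
  classical
  set V := LinearMap.range C.mulVecLin with hV
  have hrk : C.rank = Module.finrank ℝ V := rfl
  set r := Module.finrank ℝ V with hr
  have hrle : r ≤ k := le_trans (le_of_eq hrk.symm) h
  let b : Module.Basis (Fin r) ℝ V := Module.finBasis ℝ V
  have hcol : ∀ j : Fin n, (fun i => C i j) ∈ V := by
    intro j
    refine ⟨Pi.single j 1, ?_⟩
    rw [Matrix.mulVecLin_apply]
    funext i
    simp [Matrix.mulVec_single]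
  let col : Fin n → V := fun j => ⟨fun i => C i j, hcol j⟩
  let F₀ : Matrix (Fin l) (Fin r) ℝ := fun i q => ((b q : V) : Fin l → ℝ) i
  let G₀ : Matrix (Fin r) (Fin n) ℝ := fun q j => b.repr (col j) q
  have hC : C = F₀ * G₀ := by
    ext i j
    rw [Matrix.mul_apply]
    have hrepr := congrArg (fun v : ↥V => (v : Fin l → ℝ) i) (b.sum_repr (col j))
    simp only [Submodule.coe_sum, Finset.sum_apply, SetLike.val_smul, Pi.smul_apply,
      smul_eq_mul] at hrepr
    change (col j : Fin l → ℝ) i = _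
    rw [← hrepr]
    exact Finset.sum_congr rfl fun q _ => mul_comm _ _
  let J : Matrix (Fin r) (Fin k) ℝ := fun q p => if (p : ℕ) = (q : ℕ) then 1 else 0
  have hJ : J * Jᵀ = 1 := by
    ext q q'
    rw [Matrix.mul_apply, Matrix.one_apply]
    rw [Finset.sum_eq_single (⟨(q : ℕ), lt_of_lt_of_le q.isLt hrle⟩ : Fin k)]
    · simp only [Matrix.transpose_apply, J]
      by_cases hqq : q = q'
      · subst hqq; simp [Matrix.transpose, Matrix.of_apply]
      · have : ¬ ((q : ℕ) = (q' : ℕ)) := fun hc => hqq (Fin.ext hc)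
        simp [this, hqq, Matrix.transpose, Matrix.of_apply]
    · intro p _ hp
      have : ¬ ((p : ℕ) = (q : ℕ)) := by
        intro hc
        apply hp
        exact Fin.ext hc
      simp [J, this]
    · intro hmem
      exact absurd (Finset.mem_univ _) hmem
  refine ⟨F₀ * J, Jᵀ * G₀, ?_⟩
  rw [show F₀ * J * (Jᵀ * G₀) = F₀ * (J * Jᵀ) * G₀ by simp only [Matrix.mul_assoc], hJ,
    Matrix.mul_one, hC]

end Aux

/-- A one-sided rank-`k` projection guarantee onto the column space of `Q`
implies the same guarantee for the best two-sided rank-`k` approximation with range and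
co-range in the column space of `AQ`: for SPSD `A`, the minimum of `‖A − AQCQᵀA‖_F` over
rank-`≤k` matrices `C ∈ ℝ^{ℓ×ℓ}` is at most the minimum of `‖A − QC‖_F` over rank-`≤k`
matrices `C ∈ ℝ^{ℓ×n}`. -/
theorem one_sided_to_two_sided
    (n l k : ℕ) (hk : 1 ≤ k) (hkn : k < n)
    (A : Matrix (Fin n) (Fin n) ℝ) (hA : A.PosSemidef)
    (Q : Matrix (Fin n) (Fin l) ℝ) :
    ∀ C₂ : Matrix (Fin l) (Fin n) ℝ, C₂.rank ≤ k →
      ∃ C₁ : Matrix (Fin l) (Fin l) ℝ, C₁.rank ≤ k ∧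
        frobNorm (A - A * Q * C₁ * Qᵀ * A) ≤ frobNorm (A - Q * C₂) := by
  classical
  intro C₂ hC₂
  obtain ⟨F, G, hFG⟩ := rank_factor C₂ hC₂
  set S : Matrix (Fin n) (Fin n) ℝ := (open scoped MatrixOrder in CFC.sqrt A) with hSdef
  have hSS : S * S = A := by open scoped MatrixOrder in exact CFC.sqrt_mul_sqrt_self A hA.nonneg
  have hST : Sᵀ = S := by rw [← conjT]; open scoped MatrixOrder in exact (CFC.sqrt_nonneg A).posSemidef.isHermitian
  set W : Matrix (Fin n) (Fin k) ℝ := Q * F with hWdef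
  set M : Matrix (Fin n) (Fin k) ℝ := S * W with hMdef
  set p : Matrix (Fin k) (Fin k) ℝ := rpinv (Mᵀ * M) with hpdef
  set Pr : Matrix (Fin n) (Fin n) ℝ := M * p * Mᵀ with hPrdef
  have hPrT : Prᵀ = Pr := gram_symm M
  have hPrPr : Pr * Pr = Pr := gram_idem M
  have hPrM : Pr * M = M := gram_fix M
  set pw : Matrix (Fin k) (Fin k) ℝ := rpinv (Wᵀ * W) with hpwdef
  set P : Matrix (Fin n) (Fin n) ℝ := W * pw * Wᵀ with hPdef
  have hPT : Pᵀ = P := gram_symm W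
  have hPP : P * P = P := gram_idem W
  have hPW : P * W = W := gram_fix W
  set R : Matrix (Fin n) (Fin n) ℝ := 1 - P with hRdef
  have hRT : Rᵀ = R := by rw [hRdef, Matrix.transpose_sub, Matrix.transpose_one, hPT]
  have hRR : R * R = R := by
    rw [hRdef, Matrix.sub_mul, Matrix.mul_sub, Matrix.mul_sub, hPP]
    simp
  refine ⟨F * p * Fᵀ, ?_, ?_⟩
  · calc (F * p * Fᵀ).rank ≤ (F * p).rank := Matrix.rank_mul_le_left _ _
      _ ≤ F.rank := Matrix.rank_mul_le_left _ _
      _ ≤ k := by simpa using F.rank_le_card_width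
  · -- the main inequality
    have hMT : Mᵀ * S = Fᵀ * (Qᵀ * A) := by
      rw [hMdef, hWdef]
      simp only [Matrix.transpose_mul, hST, Matrix.mul_assoc]
      rw [hSS]
    have e1 : A * Q * (F * p * Fᵀ) * Qᵀ * A = S * Pr * S := by
      rw [hPrdef]
      calc A * Q * (F * p * Fᵀ) * Qᵀ * A
          = A * (Q * (F * (p * (Fᵀ * (Qᵀ * A))))) := by simp only [Matrix.mul_assoc]
        _ = S * (S * (Q * (F * (p * (Fᵀ * (Qᵀ * A)))))) := by
            rw [← Matrix.mul_assoc S S, hSS]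
        _ = S * (M * p * Mᵀ) * S := by
            rw [← hMT, hMdef, hWdef]
            simp only [Matrix.mul_assoc]
    -- the error matrix L and the comparison matrix K
    set Y : Matrix (Fin n) (Fin n) ℝ := S * R with hYdef
    have hPrS : (1 - Pr) * S = (1 - Pr) * Y := by
      rw [hYdef, hRdef, Matrix.mul_sub, Matrix.mul_sub, Matrix.mul_one]
      have hSP : S * P = M * (pw * Wᵀ) := by
        rw [hPdef, hMdef]; simp only [Matrix.mul_assoc]
      have h0 : (1 - Pr) * (S * P) = 0 := by
        rw [hSP, ← Matrix.mul_assoc, Matrix.sub_mul, Matrix.one_mul, hPrM, sub_self,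
          Matrix.zero_mul]
      rw [h0, sub_zero]
    have hsymPr : (1 - Pr)ᵀ = 1 - Pr := by rw [Matrix.transpose_sub, Matrix.transpose_one, hPrT]
    have hidemPr : (1 - Pr) * (1 - Pr) = 1 - Pr := by
      rw [Matrix.sub_mul, Matrix.mul_sub, Matrix.mul_sub, hPrPr]
      simp
    have e2 : A - S * Pr * S = ((1 - Pr) * S)ᵀ * ((1 - Pr) * S) := by
      rw [Matrix.transpose_mul, hsymPr, hST]
      have h5 : S * (1 - Pr) * ((1 - Pr) * S) = S * ((1 - Pr) * S) := by
        rw [Matrix.mul_assoc, ← Matrix.mul_assoc (1 - Pr) (1 - Pr) S, hidemPr]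
      rw [h5, Matrix.sub_mul, Matrix.one_mul, Matrix.mul_sub, hSS, ← Matrix.mul_assoc]
      rw [hPrdef]
      simp only [Matrix.mul_assoc]
    have e3 : ((1 - Pr) * Y)ᵀ * ((1 - Pr) * Y) + (Pr * Y)ᵀ * (Pr * Y) = Yᵀ * Y := by
      have hsq : ∀ Z : Matrix (Fin n) (Fin n) ℝ, Zᵀ = Z → Z * Z = Z →
          (Z * Y)ᵀ * (Z * Y) = Yᵀ * (Z * Y) := by
        intro Z hZT hZZ
        rw [Matrix.transpose_mul, hZT, Matrix.mul_assoc, ← Matrix.mul_assoc Z Z, hZZ]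
      rw [hsq _ hsymPr hidemPr, hsq _ hPrT hPrPr, ← Matrix.mul_add, ← Matrix.add_mul]
      simp
    -- positive semidefiniteness facts
    have hL_psd : (A - S * Pr * S).PosSemidef := by
      rw [e2, ← conjT]
      exact Matrix.posSemidef_conjTranspose_mul_self _
    have hKL_psd : (Yᵀ * Y - (A - S * Pr * S)).PosSemidef := by
      rw [e2, hPrS, ← e3]
      rw [add_sub_cancel_left]
      rw [← conjT]
      exact Matrix.posSemidef_conjTranspose_mul_self _
    -- step 1 : ‖A - AQC₁QᵀA‖F ≤ ‖YᵀY‖F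
    have step1 : frobNorm (A - A * Q * (F * p * Fᵀ) * Qᵀ * A) ≤ frobNorm (Yᵀ * Y) := by
      rw [e1]
      exact frob_mono_psd hL_psd hKL_psd
    -- step 2 : YᵀY = (R * (A - Q * C₂)) * R
    have hRQC : R * (Q * C₂) = 0 := by
      rw [hFG, show Q * (F * G) = W * G by rw [hWdef, Matrix.mul_assoc]]
      rw [← Matrix.mul_assoc, hRdef, Matrix.sub_mul, Matrix.one_mul, hPW, sub_self,
        Matrix.zero_mul]
    have e4 : Yᵀ * Y = (R * (A - Q * C₂)) * R := by
      have hRA : R * (A - Q * C₂) = R * A := by rw [Matrix.mul_sub, hRQC, sub_zero]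
      rw [hRA, hYdef, Matrix.transpose_mul, hRT, hST]
      rw [Matrix.mul_assoc, ← Matrix.mul_assoc S S R, hSS, ← Matrix.mul_assoc]
    -- step 3 : contraction bounds
    have step3 : frobNorm (Yᵀ * Y) ≤ frobNorm (A - Q * C₂) := by
      rw [e4]
      apply frobNorm_le_of_frobSq_le
      calc frobSq ((R * (A - Q * C₂)) * R) ≤ frobSq (R * (A - Q * C₂)) :=
            frobSq_proj_right hRT hRR _
        _ ≤ frobSq (A - Q * C₂) := frobSq_proj_left hRT hRR _
    exact le_trans step1 step3
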